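/- Let α > 0 and Φ := I_{Nn} + 𝐖. For any 𝐱^k, 𝐱^{k+1} ∈ ℝ^{Nn}, the inclusion 0 ∈ Φ(𝐱^{k+1} − 𝐱^k) + F_a(𝐱^{k+1}) + N_𝛀(𝐱^{k+1}) holds if and only if, for every agent i ∈ {1,…,N}: (a) 𝐱^{k+1}_{i,−i} = (1/2)·(𝐱^k_{i,−i} + Σ_{j=1}^N w_{ij} 𝐱^k_{j,−i}), and (b) 𝐱^{k+1}_{i,i} is the unique minimizer over y ∈ Ω_i of J_i(y, 𝐱^{k+1}_{i,−i}) + (1/(2α))·‖y − 𝐱^k_{i,i}‖² + (1/(2α))·‖y − Σ_{j=1}^N w_{ij} 𝐱^k_{j,i}‖². (That is, Algorithm 1 is exactly the preconditioned proximal-point iteration 𝐱^{k+1} ∈ J_{Φ^{-1}A}(𝐱^k).) -/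

import Mathlib

open scoped InnerProductSpace

section stmt6helpers
variable {E : Type*} [NormedAddCommGroup E] [InnerProductSpace ℝ E]

private lemma stmt6_normsq_expand (x y a : E) :
    ‖y - a‖^2 = ‖x - a‖^2 + 2 * ⟪x - a, y - x⟫_ℝ + ‖y - x‖^2 := by
  have h : y - a = (x - a) + (y - x) := by abel
  rw [h, norm_add_sq_real]

private lemma stmt6_quad_hasDerivAt (p v : E) :
    HasDerivAt (fun t : ℝ => ‖p + t • v‖^2) (2 * ⟪p, v⟫_ℝ) 0 := by
  have hfun : (fun t : ℝ => ‖p + t • v‖^2)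
      = fun t => ‖p‖^2 + (2*⟪p,v⟫_ℝ) * t + ‖v‖^2 * t^2 := by
    funext t
    rw [norm_add_sq_real, real_inner_smul_right, norm_smul]
    simp [mul_pow, sq_abs]; ring
  rw [hfun]
  have h1 := ((hasDerivAt_const (0:ℝ) (‖p‖^2)).add
    ((hasDerivAt_id (0:ℝ)).const_mul (2*⟪p,v⟫_ℝ))).add
    ((hasDerivAt_pow 2 (0:ℝ)).const_mul (‖v‖^2))
  exact h1.congr_deriv (by simp)

private lemma stmt6_dir_hasDerivAt [CompleteSpace E] {f : E → ℝ} {g : E} {x : E}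
    (hg : HasGradientAt f g x) (v : E) :
    HasDerivAt (fun t : ℝ => f (x + t • v)) ⟪g, v⟫_ℝ 0 := by
  have hf : HasFDerivAt f (InnerProductSpace.toDual ℝ E g) x :=
    hasGradientAt_iff_hasFDerivAt.mp hg
  have hline : HasDerivAt (fun t : ℝ => x + t • v) v 0 := by
    simpa using ((hasDerivAt_id (0:ℝ)).smul_const v).const_add x
  have hf' : HasFDerivAt f (InnerProductSpace.toDual ℝ E g) ((fun t : ℝ => x + t • v) 0) := by
    simpa using hf
  simpa [InnerProductSpace.toDual_apply_apply, Function.comp_def] using hf'.comp_hasDerivAt 0 hline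

private lemma stmt6_deriv_nonneg_of_min {φ : ℝ → ℝ} {c : ℝ} (hd : HasDerivAt φ c 0)
    (hmin : ∀ t ∈ Set.Ioo (0:ℝ) 1, φ 0 ≤ φ t) : 0 ≤ c := by
  have h := hasDerivAt_iff_tendsto_slope.mp hd
  have h2 : Filter.Tendsto (slope φ 0) (nhdsWithin 0 (Set.Ioi 0)) (nhds c) :=
    h.mono_left (nhdsWithin_mono _ (fun t ht => ne_of_gt ht))
  refine ge_of_tendsto h2 ?_
  filter_upwards [Ioo_mem_nhdsGT_of_mem (Set.mem_Ico.mpr ⟨le_refl (0:ℝ), zero_lt_one⟩)] with t ht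
  rw [slope_def_field]
  have := hmin t ht
  have ht0 : (0:ℝ) < t := ht.1
  apply div_nonneg <;> linarith

private lemma stmt6_deriv_le_of_slope {φ : ℝ → ℝ} {c B : ℝ} (hd : HasDerivAt φ c 0)
    (hb : ∀ t ∈ Set.Ioo (0:ℝ) 1, φ t ≤ φ 0 + t * B) : c ≤ B := by
  have h := hasDerivAt_iff_tendsto_slope.mp hd
  have h2 : Filter.Tendsto (slope φ 0) (nhdsWithin 0 (Set.Ioi 0)) (nhds c) :=
    h.mono_left (nhdsWithin_mono _ (fun t ht => ne_of_gt ht))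
  refine le_of_tendsto h2 ?_
  filter_upwards [Ioo_mem_nhdsGT_of_mem (Set.mem_Ico.mpr ⟨le_refl (0:ℝ), zero_lt_one⟩)] with t ht
  rw [slope_def_field]
  have := hb t ht
  have ht0 : (0:ℝ) < t := ht.1
  rw [div_le_iff₀ (by linarith)]
  nlinarith

private lemma stmt6_grad_ineq [CompleteSpace E] {f : E → ℝ} {g x : E}
    (hconv : ConvexOn ℝ Set.univ f) (hg : HasGradientAt f g x) (y : E) :
    ⟪g, y - x⟫_ℝ ≤ f y - f x := by
  refine stmt6_deriv_le_of_slope (stmt6_dir_hasDerivAt hg (y - x)) ?_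
  intro t ht
  have h := hconv.2 (Set.mem_univ x) (Set.mem_univ y)
    (by linarith [ht.2] : (0:ℝ) ≤ 1 - t) (le_of_lt ht.1) (by ring)
  have hx : x + t • (y - x) = (1-t) • x + t • y := by module
  have h0 : (fun t : ℝ => f (x + t • (y - x))) 0 = f x := by simp
  rw [hx]
  simp only [smul_eq_mul] at h
  simp only [h0]
  nlinarith [h]

/-- VI at `xs` implies strict minimality of the proximal objective. -/
private lemma stmt6_vi_to_min [CompleteSpace E] {J : E → ℝ} {g : E} {xs a s : E} {α : ℝ}
    (hα : 0 < α) (hconv : ConvexOn ℝ Set.univ J) (hg : HasGradientAt J g xs)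
    {y : E} (hne : y ≠ xs)
    (hin : 0 ≤ α * ⟪g, y - xs⟫_ℝ + ⟪xs - a, y - xs⟫_ℝ + ⟪xs - s, y - xs⟫_ℝ) :
    J xs + (1/(2*α)) * ‖xs - a‖^2 + (1/(2*α)) * ‖xs - s‖^2
      < J y + (1/(2*α)) * ‖y - a‖^2 + (1/(2*α)) * ‖y - s‖^2 := by
  have hJ := stmt6_grad_ineq hconv hg y
  have hE1 := stmt6_normsq_expand xs y a
  have hE2 := stmt6_normsq_expand xs y s
  have hn : (0:ℝ) < ‖y - xs‖^2 := by
    have h := sub_ne_zero.mpr hne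
    exact pow_pos (norm_pos_iff.mpr h) 2
  have h2a : (0:ℝ) < 2*α := by linarith
  set g1 := ⟪g, y - xs⟫_ℝ
  set p := ⟪xs - a, y - xs⟫_ℝ
  set q := ⟪xs - s, y - xs⟫_ℝ
  set n := ‖y - xs‖^2
  have hdiff : (J y + (1/(2*α)) * ‖y - a‖^2 + (1/(2*α)) * ‖y - s‖^2)
      - (J xs + (1/(2*α)) * ‖xs - a‖^2 + (1/(2*α)) * ‖xs - s‖^2)
      = (J y - J xs) + (1/(2*α))*(2*p+n) + (1/(2*α))*(2*q+n) := by
    rw [hE1, hE2]; ring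
  have hXpos : (0:ℝ) < g1 + (1/(2*α))*(2*p+n) + (1/(2*α))*(2*q+n) := by
    have hmul : (2*α) * (g1 + (1/(2*α))*(2*p+n) + (1/(2*α))*(2*q+n))
        = 2*α*g1 + (2*p+n) + (2*q+n) := by
      field_simp
    by_contra hX
    push_neg at hX
    nlinarith [mul_nonneg h2a.le (neg_nonneg.mpr hX), hmul, hin, hn]
  have hmono : (1/(2*α))*(2*p+n) + (1/(2*α))*(2*q+n) + g1
      ≤ (1/(2*α))*(2*p+n) + (1/(2*α))*(2*q+n) + (J y - J xs) := by linarith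
  linarith [hdiff, hXpos, hmono]

/-- Minimality of the proximal objective over a convex set implies the VI at `xs`. -/
private lemma stmt6_min_to_vi [CompleteSpace E] {J : E → ℝ} {g : E} {Ωi : Set E}
    (hΩ : Convex ℝ Ωi) {xs a s : E} {α : ℝ} (hα : 0 < α)
    (hg : HasGradientAt J g xs) (hxs : xs ∈ Ωi)
    (hmin : ∀ y ∈ Ωi, J xs + (1/(2*α)) * ‖xs - a‖^2 + (1/(2*α)) * ‖xs - s‖^2
      ≤ J y + (1/(2*α)) * ‖y - a‖^2 + (1/(2*α)) * ‖y - s‖^2)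
    {y : E} (hy : y ∈ Ωi) :
    0 ≤ α * ⟪g, y - xs⟫_ℝ + ⟪xs - a, y - xs⟫_ℝ + ⟪xs - s, y - xs⟫_ℝ := by
  set v := y - xs with hv
  have hd1 : HasDerivAt (fun t : ℝ => J (xs + t • v)) ⟪g, v⟫_ℝ 0 := stmt6_dir_hasDerivAt hg v
  have hq : ∀ (b : E), HasDerivAt (fun t : ℝ => ‖(xs + t • v) - b‖^2) (2*⟪xs - b, v⟫_ℝ) 0 := by
    intro b
    have h := stmt6_quad_hasDerivAt (xs - b) v
    have heq : (fun t : ℝ => ‖(xs - b) + t • v‖^2) = fun t : ℝ => ‖(xs + t • v) - b‖^2 := by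
      funext t
      have : (xs - b) + t • v = (xs + t • v) - b := by abel
      rw [this]
    rwa [heq] at h
  have hd : HasDerivAt
      (fun t : ℝ => J (xs + t • v) + (1/(2*α)) * ‖(xs + t • v) - a‖^2
        + (1/(2*α)) * ‖(xs + t • v) - s‖^2)
      (⟪g,v⟫_ℝ + (1/(2*α)) * (2*⟪xs - a,v⟫_ℝ) + (1/(2*α)) * (2*⟪xs - s,v⟫_ℝ)) 0 :=
    (hd1.add ((hq a).const_mul (1/(2*α)))).add ((hq s).const_mul (1/(2*α)))
  have hmin' : ∀ t ∈ Set.Ioo (0:ℝ) 1,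
      (fun t : ℝ => J (xs + t • v) + (1/(2*α)) * ‖(xs + t • v) - a‖^2
        + (1/(2*α)) * ‖(xs + t • v) - s‖^2) 0
      ≤ (fun t : ℝ => J (xs + t • v) + (1/(2*α)) * ‖(xs + t • v) - a‖^2
        + (1/(2*α)) * ‖(xs + t • v) - s‖^2) t := by
    intro t ht
    have hmem : xs + t • v ∈ Ωi := by
      have h := hΩ hxs hy (by linarith [ht.2] : (0:ℝ) ≤ 1 - t) (le_of_lt ht.1) (by ring)
      have heq : (1-t) • xs + t • y = xs + t • v := by rw [hv]; module
      rwa [heq] at h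
    simp only []
    have h0 : xs + (0:ℝ) • v = xs := by simp
    rw [h0]
    exact hmin _ hmem
  have hc := stmt6_deriv_nonneg_of_min hd hmin'
  have hkey : α * (⟪g,v⟫_ℝ + (1/(2*α)) * (2*⟪xs - a,v⟫_ℝ) + (1/(2*α)) * (2*⟪xs - s,v⟫_ℝ))
      = α*⟪g,v⟫_ℝ + ⟪xs - a,v⟫_ℝ + ⟪xs - s,v⟫_ℝ := by
    field_simp
  have := mul_nonneg hα.le hc
  linarith [hkey ▸ this]

end stmt6helpers

open scoped InnerProductSpace

/-- The strategy-profile space `ℝ^n = ℝ^{n_1} × ⋯ × ℝ^{n_N}`, with the Euclidean (ℓ²)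
structure. Block `i` is agent `i`'s strategy space `ℝ^{n_i}`. -/
abbrev Prof (N : ℕ) (d : Fin N → ℕ) : Type :=
  PiLp 2 (fun i : Fin N => EuclideanSpace ℝ (Fin (d i)))

/-- The stacked space `ℝ^{Nn}` of all agents' estimates; block `i` is agent `i`'s estimate
`𝐱_i ∈ ℝ^n` of the full strategy profile. -/
abbrev Est (N : ℕ) (d : Fin N → ℕ) : Type :=
  PiLp 2 (fun _ : Fin N => Prof N d)

/-- The pseudo-gradient `F(x) := col(∇_{x_i} J_i(x_i, x_{−i}))_i`, built from the partial
gradients `G i`. -/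
noncomputable def pseudoGrad {N : ℕ} {d : Fin N → ℕ}
    (G : ∀ i : Fin N, Prof N d → EuclideanSpace ℝ (Fin (d i)))
    (x : Prof N d) : Prof N d :=
  WithLp.toLp 2 (fun i => G i x)

/-- The extended pseudo-gradient `𝐅(𝐱) := col(∇_{x_i} J_i(𝐱_{i,i}, 𝐱_{i,−i}))_i`. -/
noncomputable def extPseudoGrad {N : ℕ} {d : Fin N → ℕ}
    (G : ∀ i : Fin N, Prof N d → EuclideanSpace ℝ (Fin (d i)))
    (bx : Est N d) : Prof N d :=
  WithLp.toLp 2 (fun i => G i (bx i))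

/-- `Rᵀ` places block `i` of `v ∈ ℝ^n` in the `(i,i)`-block position of `ℝ^{Nn}`,
with zeros elsewhere. -/
noncomputable def RT {N : ℕ} {d : Fin N → ℕ} (v : Prof N d) : Est N d :=
  WithLp.toLp 2 (fun i => WithLp.toLp 2 (Function.update (0 : Prof N d) i (v i)))

/-- `𝐖 = W ⊗ I_n` acting blockwise: `(𝐖𝐱)_i = Σ_j w_{ij} 𝐱_j`. -/
noncomputable def Wact {N : ℕ} {d : Fin N → ℕ} (W : Matrix (Fin N) (Fin N) ℝ) (bx : Est N d) : Est N d :=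
  WithLp.toLp 2 (fun i => ∑ j, W i j • bx j)

/-- `F_a(𝐱) := α Rᵀ𝐅(𝐱) + (I_{Nn} − 𝐖)𝐱`. -/
noncomputable def Fa {N : ℕ} {d : Fin N → ℕ} (α : ℝ)
    (G : ∀ i : Fin N, Prof N d → EuclideanSpace ℝ (Fin (d i)))
    (W : Matrix (Fin N) (Fin N) ℝ) (bx : Est N d) : Est N d :=
  α • RT (extPseudoGrad G bx) + (bx - Wact W bx)

/-- `𝛀 := {𝐱 ∈ ℝ^{Nn} : 𝐱_{i,i} ∈ Ω_i for all i}`. -/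
def bigOmega {N : ℕ} {d : Fin N → ℕ}
    (Ω : ∀ i : Fin N, Set (EuclideanSpace ℝ (Fin (d i)))) : Set (Est N d) :=
  {bx | ∀ i, bx i i ∈ Ω i}

/-- Normal cone operator of a closed convex set `S` at `x`
(empty if `x ∉ S`). -/
def normalCone {E : Type*} [NormedAddCommGroup E] [InnerProductSpace ℝ E]
    (S : Set E) (x : E) : Set E :=
  {v | x ∈ S ∧ ∀ z ∈ S, ⟪v, z - x⟫_ℝ ≤ 0}

/-- The consensus subspace `E_n := {𝟏_N ⊗ y : y ∈ ℝ^n} ⊆ ℝ^{Nn}`. -/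
def consensus (N : ℕ) (d : Fin N → ℕ) : Set (Est N d) :=
  {bx | ∃ y : Prof N d, ∀ i, bx i = y}

/-- The preconditioning matrix `Φ := I_{Nn} + 𝐖`, as an operator on `ℝ^{Nn}`. -/
noncomputable def PhiOp {N : ℕ} {d : Fin N → ℕ} (W : Matrix (Fin N) (Fin N) ℝ)
    (bx : Est N d) : Est N d :=
  bx + Wact W bx


section stmt6coord
variable {N : ℕ} {d : Fin N → ℕ}

private lemma stmt6_sum_apply {ι : Type*} (s : Finset ι) (f : ι → Prof N d) (j : Fin N) :
    (∑ l ∈ s, f l) j = ∑ l ∈ s, f l j := by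
  rw [WithLp.ofLp_sum]; exact Finset.sum_apply j s _

private lemma stmt6_u_off (α : ℝ) (G : ∀ i : Fin N, Prof N d → EuclideanSpace ℝ (Fin (d i)))
    (W : Matrix (Fin N) (Fin N) ℝ) (bx bx' : Est N d) (i j : Fin N) (hji : j ≠ i) :
    (PhiOp W (bx' - bx) + Fa α G W bx') i j
      = (2:ℝ) • bx' i j - (bx i j + ∑ l, W i l • bx l j) := by
  show (PhiOp W (bx' - bx)) i j + (Fa α G W bx') i j = _
  have h1 : (PhiOp W (bx' - bx)) i j
      = (bx' i j - bx i j) + ∑ l, W i l • (bx' l j - bx l j) := by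
    show (bx' - bx) i j + (Wact W (bx' - bx)) i j = _
    simp [Wact, stmt6_sum_apply]
  have h2 : (Fa α G W bx') i j
      = α • (Function.update (0 : Prof N d) i (extPseudoGrad G bx' i)) j
        + (bx' i j - ∑ l, W i l • bx' l j) := by
    show (α • RT (extPseudoGrad G bx')) i j + (bx' - Wact W bx') i j = _
    simp [RT, Wact, stmt6_sum_apply]
  rw [h1, h2, Function.update_of_ne hji]
  have hz : (0 : Prof N d) j = (0 : EuclideanSpace ℝ (Fin (d j))) := rfl
  rw [hz]
  simp only [smul_zero, zero_add, smul_sub, Finset.sum_sub_distrib, two_smul]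
  abel

private lemma stmt6_u_diag (α : ℝ) (G : ∀ i : Fin N, Prof N d → EuclideanSpace ℝ (Fin (d i)))
    (W : Matrix (Fin N) (Fin N) ℝ) (bx bx' : Est N d) (i : Fin N) :
    (PhiOp W (bx' - bx) + Fa α G W bx') i i
      = α • G i (bx' i) + ((2:ℝ) • bx' i i - (bx i i + ∑ l, W i l • bx l i)) := by
  show (PhiOp W (bx' - bx)) i i + (Fa α G W bx') i i = _
  have h1 : (PhiOp W (bx' - bx)) i i
      = (bx' i i - bx i i) + ∑ l, W i l • (bx' l i - bx l i) := by
    simp [PhiOp, Wact, stmt6_sum_apply]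
  have h2 : (Fa α G W bx') i i
      = α • (Function.update (0 : Prof N d) i (extPseudoGrad G bx' i)) i
        + (bx' i i - ∑ l, W i l • bx' l i) := by
    simp [Fa, RT, Wact, stmt6_sum_apply]
  rw [h1, h2, Function.update_self]
  show _ = α • G i (bx' i) + _
  simp only [smul_sub, Finset.sum_sub_distrib, two_smul]
  abel

private lemma stmt6_est_inner (p q : Est N d) :
    ⟪p, q⟫_ℝ = ∑ i, ∑ j, ⟪p i j, q i j⟫_ℝ := by
  rw [PiLp.inner_apply]
  exact Finset.sum_congr rfl fun i _ => PiLp.inner_apply _ _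

private lemma stmt6_inner_bump (p : Est N d) (i j : Fin N)
    (c : EuclideanSpace ℝ (Fin (d j))) :
    ⟪p, WithLp.toLp 2 (Function.update (0 : Est N d) i (WithLp.toLp 2 (Function.update (0 : Prof N d) j c)))⟫_ℝ
      = ⟪p i j, c⟫_ℝ := by
  rw [stmt6_est_inner]
  rw [Finset.sum_eq_single i]
  · simp only [WithLp.ofLp_toLp, Function.update_self]
    rw [Finset.sum_eq_single j]
    · rw [WithLp.ofLp_toLp, Function.update_self]
    · intro m _ hm
      rw [Function.update_of_ne hm]
      exact inner_zero_right _
    · intro hj; exact absurd (Finset.mem_univ j) hj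
  · intro k _ hk
    simp only [WithLp.ofLp_toLp, Function.update_of_ne hk]
    have : ∀ m, ⟪p k m, (0 : Est N d) k m⟫_ℝ = 0 := fun m => inner_zero_right _
    simp [this]
  · intro hi; exact absurd (Finset.mem_univ i) hi

end stmt6coord
/-- Lemma 2 of the paper. For `Φ := I_{Nn} + 𝐖`, the inclusion
`0 ∈ Φ(𝐱^{k+1} − 𝐱^k) + F_a(𝐱^{k+1}) + N_𝛀(𝐱^{k+1})` holds iff, for every agent `i`:
(a) `𝐱^{k+1}_{i,−i} = ½(𝐱^k_{i,−i} + Σ_j w_{ij}𝐱^k_{j,−i})`, and (b) `𝐱^{k+1}_{i,i}` is the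
unique minimizer over `Ω_i` of
`y ↦ J_i(y, 𝐱^{k+1}_{i,−i}) + (1/2α)‖y − 𝐱^k_{i,i}‖² + (1/2α)‖y − Σ_j w_{ij}𝐱^k_{j,i}‖²`;
i.e. Algorithm 1 is exactly the preconditioned proximal-point iteration
`𝐱^{k+1} ∈ J_{Φ⁻¹A}(𝐱^k)`. -/
theorem stmt6 {N : ℕ} {d : Fin N → ℕ}
    (Ω : ∀ i : Fin N, Set (EuclideanSpace ℝ (Fin (d i))))
    (hΩ : ∀ i, (Ω i).Nonempty ∧ IsClosed (Ω i) ∧ Convex ℝ (Ω i))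
    (J : ∀ _ : Fin N, Prof N d → ℝ)
    (hJcont : ∀ i, Continuous (J i))
    (hJconv : ∀ i (x : Prof N d),
      ConvexOn ℝ Set.univ (fun y => J i (WithLp.toLp 2 (Function.update x i y))))
    (G : ∀ i : Fin N, Prof N d → EuclideanSpace ℝ (Fin (d i)))
    (hGgrad : ∀ i (x : Prof N d),
      HasGradientAt (fun y => J i (WithLp.toLp 2 (Function.update x i y))) (G i x) (x i))
    (μ θ0 : ℝ) (hμ : 0 < μ) (hθ0 : 0 < θ0)
    (hFmon : ∀ x y : Prof N d,
      ⟪x - y, pseudoGrad G x - pseudoGrad G y⟫_ℝ ≥ μ * ‖x - y‖ ^ 2)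
    (hFlip : ∀ x y : Prof N d, ‖pseudoGrad G x - pseudoGrad G y‖ ≤ θ0 * ‖x - y‖)
    (W : Matrix (Fin N) (Fin N) ℝ)
    (hWsymm : W.IsSymm) (hWnonneg : ∀ i j, 0 ≤ W i j)
    (hWstoch : ∀ i, ∑ j, W i j = 1) (hWdiag : ∀ i, 0 < W i i)
    (α : ℝ) (hα : 0 < α)
    (bx bx' : Est N d) :
    (∃ w ∈ normalCone (bigOmega Ω) bx',
        PhiOp W (bx' - bx) + Fa α G W bx' + w = 0) ↔
      (∀ i : Fin N,
        -- (a) consensus update of the estimates of the other agents' strategies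
        (∀ j, j ≠ i → bx' i j = (1 / 2 : ℝ) • (bx i j + ∑ l, W i l • bx l j)) ∧
        -- (b) own strategy update: unique minimizer of the proximal best-response
        (bx' i i ∈ Ω i ∧
          ∀ y ∈ Ω i, y ≠ bx' i i →
            J i (WithLp.toLp 2 (Function.update (bx' i) i (bx' i i))) +
              (1 / (2 * α)) * ‖bx' i i - bx i i‖ ^ 2 +
              (1 / (2 * α)) * ‖bx' i i - ∑ j, W i j • bx j i‖ ^ 2 <
            J i (WithLp.toLp 2 (Function.update (bx' i) i y)) +
              (1 / (2 * α)) * ‖y - bx i i‖ ^ 2 +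
              (1 / (2 * α)) * ‖y - ∑ j, W i j • bx j i‖ ^ 2)) := by
    classical
  set u : Est N d := PhiOp W (bx' - bx) + Fa α G W bx' with hu
  have hud : ∀ i, u i i = α • G i (bx' i)
      + ((2:ℝ) • bx' i i - (bx i i + ∑ l, W i l • bx l i)) := by
    intro i; rw [hu]; exact stmt6_u_diag α G W bx bx' i
  have huo : ∀ i j, j ≠ i → u i j
      = (2:ℝ) • bx' i j - (bx i j + ∑ l, W i l • bx l j) := by
    intro i j hji; rw [hu]; exact stmt6_u_off α G W bx bx' i j hji
  have hinner_uii : ∀ i (v : EuclideanSpace ℝ (Fin (d i))),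
      ⟪u i i, v⟫_ℝ = α * ⟪G i (bx' i), v⟫_ℝ
        + ⟪bx' i i - bx i i, v⟫_ℝ + ⟪bx' i i - (∑ l, W i l • bx l i), v⟫_ℝ := by
    intro i v
    have hsplit : (2:ℝ) • bx' i i - (bx i i + ∑ l, W i l • bx l i)
        = (bx' i i - bx i i) + (bx' i i - ∑ l, W i l • bx l i) := by module
    rw [hud i, hsplit, inner_add_left, inner_add_left, real_inner_smul_left]
    ring
  constructor
  · rintro ⟨w, ⟨hbxΩ, hw⟩, heq⟩
    have hwu : w = -u := eq_neg_of_add_eq_zero_right heq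
    have hVI : ∀ z ∈ bigOmega Ω, (0:ℝ) ≤ ⟪u, z - bx'⟫_ℝ := by
      intro z hz
      have h := hw z hz
      rw [hwu, inner_neg_left] at h
      linarith
    have hzero : ∀ i j, j ≠ i → u i j = 0 := by
      intro i j hji
      set e : Est N d := WithLp.toLp 2 (Function.update (0 : Est N d) i
        (WithLp.toLp 2 (Function.update (0 : Prof N d) j (-(u i j))))) with he
      have hmem : bx' + e ∈ bigOmega Ω := by
        intro k
        show (bx' + e) k k ∈ Ω k
        have hk : (bx' + e) k k = bx' k k + e k k := rfl
        rw [hk]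
        by_cases hki : k = i
        · subst hki
          have h1 : e k k = 0 := by
            rw [he, WithLp.ofLp_toLp, Function.update_self, WithLp.ofLp_toLp, Function.update_of_ne (Ne.symm hji)]
            rfl
          rw [h1, add_zero]; exact hbxΩ k
        · have h1 : e k k = 0 := by
            rw [he, WithLp.ofLp_toLp, Function.update_of_ne hki]; rfl
          rw [h1, add_zero]; exact hbxΩ k
      have h0 := hVI (bx' + e) hmem
      rw [add_sub_cancel_left, he, stmt6_inner_bump, inner_neg_right,
        real_inner_self_eq_norm_sq] at h0
      have h1 : ‖u i j‖ ^ 2 = 0 := le_antisymm (by linarith) (by positivity)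
      exact norm_eq_zero.mp (pow_eq_zero_iff two_ne_zero |>.mp h1)
    intro i
    refine ⟨?_, hbxΩ i, ?_⟩
    · intro j hji
      have h := huo i j hji
      rw [hzero i j hji] at h
      have h2 : (2:ℝ) • bx' i j = bx i j + ∑ l, W i l • bx l j :=
        sub_eq_zero.mp h.symm
      calc bx' i j = (1/2:ℝ) • ((2:ℝ) • bx' i j) := by rw [smul_smul]; norm_num
        _ = (1/2:ℝ) • (bx i j + ∑ l, W i l • bx l j) := by rw [h2]
    · intro y hy hne
      set e : Est N d := WithLp.toLp 2 (Function.update (0 : Est N d) i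
        (WithLp.toLp 2 (Function.update (0 : Prof N d) i (y - bx' i i)))) with he
      have hmem : bx' + e ∈ bigOmega Ω := by
        intro k
        show (bx' + e) k k ∈ Ω k
        have hk : (bx' + e) k k = bx' k k + e k k := rfl
        rw [hk]
        by_cases hki : k = i
        · subst hki
          have h1 : e k k = y - bx' k k := by
            rw [he, WithLp.ofLp_toLp, Function.update_self, WithLp.ofLp_toLp, Function.update_self]
          rw [h1]
          have h2 : bx' k k + (y - bx' k k) = y := by abel
          rw [h2]; exact hy
        · have h1 : e k k = 0 := by
            rw [he, WithLp.ofLp_toLp, Function.update_of_ne hki]; rfl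
          rw [h1, add_zero]; exact hbxΩ k
      have h0 := hVI (bx' + e) hmem
      rw [add_sub_cancel_left, he, stmt6_inner_bump, hinner_uii i (y - bx' i i)] at h0
      exact stmt6_vi_to_min (J := fun z => J i (WithLp.toLp 2 (Function.update (bx' i) i z)))
        hα (hJconv i (bx' i)) (hGgrad i (bx' i)) hne h0
  · intro hR
    refine ⟨-u, ⟨fun i => (hR i).2.1, ?_⟩, ?_⟩
    · intro z hz
      rw [inner_neg_left]
      have hpos : (0:ℝ) ≤ ⟪u, z - bx'⟫_ℝ := by
        rw [stmt6_est_inner]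
        refine Finset.sum_nonneg fun i _ => Finset.sum_nonneg fun j _ => ?_
        have hsub : (z - bx') i j = z i j - bx' i j := rfl
        rw [hsub]
        by_cases hji : j = i
        · subst hji
          have hmin : ∀ y ∈ Ω j,
              J j (WithLp.toLp 2 (Function.update (bx' j) j (bx' j j)))
                + (1/(2*α)) * ‖bx' j j - bx j j‖^2
                + (1/(2*α)) * ‖bx' j j - ∑ l, W j l • bx l j‖^2
              ≤ J j (WithLp.toLp 2 (Function.update (bx' j) j y))
                + (1/(2*α)) * ‖y - bx j j‖^2
                + (1/(2*α)) * ‖y - ∑ l, W j l • bx l j‖^2 := by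
            intro y hy
            by_cases hyx : y = bx' j j
            · rw [hyx]
            · have h := (hR j).2.2 y hy hyx
              have h2a : 1 / (2 * α) = 1 / (2 * α) := rfl
              linarith [h]
          have h := stmt6_min_to_vi (J := fun t => J j (WithLp.toLp 2 (Function.update (bx' j) j t)))
            ((hΩ j).2.2) hα (hGgrad j (bx' j)) ((hR j).2.1) hmin (hz j)
          rw [hinner_uii j]
          exact h
        · have hz0 : u i j = 0 := by
            rw [huo i j hji, (hR i).1 j hji, smul_smul]
            norm_num
          rw [hz0, inner_zero_left]
      linarith
    · show u + -u = 0
      exact add_neg_cancel u
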